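/- Let λ_1,…,λ_k ∈ ℂ be pairwise distinct and w, h ∈ ℂ^k. Set Λ = diag(λ_1,…,λ_k), A = Λ − w·𝟙^T ∈ ℂ^{k×k} (where 𝟙 ∈ ℂ^k is the all-ones vector), b = w and c = h. Then for every s ∈ ℂ with s ∉ {λ_1,…,λ_k} and d(s) := 1 + Σ_{j=1}^k w_j/(s−λ_j) ≠ 0, the matrix sI_k − A is invertible and c^T (sI_k − A)^{-1} b = (Σ_{j=1}^k h_j w_j/(s−λ_j)) / d(s). -/

import Mathlib

open BigOperators

/-- State-space realization of the unstructured barycentric form: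
with `A = Λ − w𝟙ᵀ`, `b = w`, `c = h`, for each `s` outside the support points with
nonvanishing barycentric denominator `d(s)`, the matrix `sI − A` is invertible and
`cᵀ(sI − A)⁻¹ b = (Σ_j h_j w_j/(s−λ_j)) / d(s)`. -/
theorem stmt_11 (k : ℕ) (lam : Fin k → ℂ) (hlam : Function.Injective lam)
    (w h : Fin k → ℂ)
    (A : Matrix (Fin k) (Fin k) ℂ)
    (hA : A = Matrix.diagonal lam - Matrix.of (fun i _ => w i))
    (s : ℂ) (hs : ∀ j, s ≠ lam j)
    (hd : 1 + ∑ j, w j / (s - lam j) ≠ 0) :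
    IsUnit (s • (1 : Matrix (Fin k) (Fin k) ℂ) - A)
    ∧ dotProduct h ((s • (1 : Matrix (Fin k) (Fin k) ℂ) - A)⁻¹.mulVec w)
        = (∑ j, h j * w j / (s - lam j)) / (1 + ∑ j, w j / (s - lam j)) := by
  have hsj : ∀ j, s - lam j ≠ 0 := fun j => sub_ne_zero.mpr (hs j)
  set D : Matrix (Fin k) (Fin k) ℂ := Matrix.diagonal (fun j => s - lam j) with hD
  set M : Matrix (Fin k) (Fin k) ℂ := s • (1 : Matrix (Fin k) (Fin k) ℂ) - A with hM
  have hMD : M = D + Matrix.replicateCol Unit w * Matrix.replicateRow Unit (fun _ => (1 : ℂ)) := by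
    ext i j
    simp [hM, hA, hD, Matrix.diagonal, Matrix.one_apply, Matrix.mul_apply,
      Matrix.replicateCol, Matrix.replicateRow]
    by_cases hij : i = j <;> simp [hij] <;> ring
  have hDdet : IsUnit D.det := by
    rw [hD, Matrix.det_diagonal]
    exact (Finset.prod_ne_zero_iff.mpr fun j _ => hsj j).isUnit
  have hDinv : D⁻¹ = Matrix.diagonal (fun j => (s - lam j)⁻¹) := by
    apply Matrix.inv_eq_right_inv
    rw [hD, Matrix.diagonal_mul_diagonal]
    have h1 : (fun j => (s - lam j) * (s - lam j)⁻¹) = fun _ => (1 : ℂ) :=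
      funext fun j => mul_inv_cancel₀ (hsj j)
    rw [h1, Matrix.diagonal_one]
  have hdetM : M.det = D.det * (1 + ∑ j, w j / (s - lam j)) := by
    rw [hMD, Matrix.det_add_replicateCol_mul_replicateRow hDdet]
    congr 1
    rw [Matrix.det_unique]
    simp [Matrix.mul_apply, hDinv, Matrix.diagonal, div_eq_inv_mul, mul_comm]
  have hMunit : IsUnit M.det := by
    rw [hdetM]
    exact hDdet.mul hd.isUnit
  refine ⟨(Matrix.isUnit_iff_isUnit_det M).mpr hMunit, ?_⟩
  set d : ℂ := 1 + ∑ j, w j / (s - lam j) with hdd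
  set x : Fin k → ℂ := fun j => w j / ((s - lam j) * d) with hx
  have hMx : M.mulVec x = w := by
    funext i
    have : ∀ j, M i j = (if i = j then s - lam i else 0) + w i := by
      intro j
      rw [hMD]
      simp [hD, Matrix.diagonal, Matrix.mul_apply, Matrix.replicateCol, Matrix.replicateRow]
    simp only [Matrix.mulVec, dotProduct, this, add_mul, ite_mul, zero_mul,
      Finset.sum_add_distrib, Finset.sum_ite_eq, Finset.mem_univ, if_true]
    have h1 : (s - lam i) * x i = w i / d := by
      rw [hx]
      field_simp [hsj i, hd]
    have h2 : ∑ j, w i * x j = w i * ((d - 1) / d) := by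
      rw [← Finset.mul_sum]
      congr 1
      rw [hx]
      have : ∀ j, w j / ((s - lam j) * d) = (w j / (s - lam j)) / d := by
        intro j; rw [div_div]
      simp_rw [this]
      rw [← Finset.sum_div, hdd]
      congr 1
      ring
    rw [h1, h2]
    field_simp
    ring
  have hinv : M⁻¹.mulVec w = x := by
    conv_lhs => rw [← hMx]
    rw [Matrix.mulVec_mulVec, Matrix.nonsing_inv_mul M hMunit, Matrix.one_mulVec]
  rw [hinv]
  rw [dotProduct, Finset.sum_div]
  refine Finset.sum_congr rfl fun j _ => ?_
  rw [hx, div_div]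
  ring
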